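/- For the flat square pyramid V_n = conv{(0,0,0),(n,0,0),(0,n,0),(n,n,0),(0,0,1)}, one has vol(V_n) = n^2/3 and χ(V_n) = n^2/2 − O(n) as n → ∞, so δ(V_n) ∼ n^2/6. -/

import Mathlib

open Real MeasureTheory
noncomputable section
abbrev E3 := EuclideanSpace ℝ (Fin 3)
/-- The point (a,b,c) in Euclidean 3-space. -/
def pt (a b c : ℝ) : E3 := WithLp.toLp 2 ![a, b, c]
/-- Dihedral angle of the tetrahedron `conv {a,b,c,d}` at the edge `[a,b]`:
the angle between the components of `c - a` and `d - a` orthogonal to `b - a`. -/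
def dihedral (a b c d : E3) : ℝ :=
  InnerProductGeometry.angle
    ((c - a) - ((inner ℝ (c - a) (b - a) : ℝ) / (inner ℝ (b - a) (b - a) : ℝ)) • (b - a))
    ((d - a) - ((inner ℝ (d - a) (b - a) : ℝ) / (inner ℝ (b - a) (b - a) : ℝ)) • (b - a))
/-- The (normalized) solid angle of `P` at `x`. -/
def solidAngle (P : Set E3) (x : E3) : ℝ :=
  Filter.limUnder (nhdsWithin (0:ℝ) (Set.Ioi 0))
    (fun ε => (volume (Metric.ball x ε ∩ P)).toReal / (volume (Metric.ball x ε)).toReal)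
/-- The discrete volume `χ(P)`: the sum of solid angles over all lattice points of `P`. -/
def discreteVolume (P : Set E3) : ℝ :=
  ∑' v : Fin 3 → ℤ, Set.indicator P (solidAngle P) (WithLp.toLp 2 (fun i => (v i : ℝ)) : E3)
/-- The volume defect `δ(P) = χ(P) - vol(P)`. -/
def defect (P : Set E3) : ℝ := discreteVolume P - (volume P).toReal

/-- The flat square pyramid `V_n`. -/
def flatPyramid (n : ℕ) : Set E3 :=
  convexHull ℝ {pt 0 0 0, pt (n : ℝ) 0 0, pt 0 (n : ℝ) 0, pt (n : ℝ) (n : ℝ) 0, pt 0 0 1}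

/-! ## Auxiliary development -/
open Pointwise

section Aux

/-- H-description of the flat pyramid. -/
def Hset (n : ℕ) : Set E3 :=
  {p | 0 ≤ p 0 ∧ 0 ≤ p 1 ∧ 0 ≤ p 2 ∧ p 2 ≤ 1 ∧ p 0 + n * p 2 ≤ n ∧ p 1 + n * p 2 ≤ n}

lemma convex_Hset (n : ℕ) : Convex ℝ (Hset n) := by
  intro x hx y hy a b ha hb hab
  obtain ⟨h1, h2, h3, h4, h5, h6⟩ := hx
  obtain ⟨k1, k2, k3, k4, k5, k6⟩ := hy
  have e : ∀ i : Fin 3, (a • x + b • y) i = a * x i + b * y i := fun i => by simp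
  refine ⟨?_, ?_, ?_, ?_, ?_, ?_⟩ <;> simp only [e] <;> nlinarith

lemma pyramid_subset (n : ℕ) : flatPyramid n ⊆ Hset n := by
  apply convexHull_min _ (convex_Hset n)
  have hn : (0:ℝ) ≤ n := Nat.cast_nonneg n
  intro p hp
  simp only [Set.mem_insert_iff, Set.mem_singleton_iff] at hp
  rcases hp with rfl | rfl | rfl | rfl | rfl <;>
    refine ⟨?_, ?_, ?_, ?_, ?_, ?_⟩ <;> simp [pt] <;> linarith

lemma Hset_subset (n : ℕ) : Hset n ⊆ flatPyramid n := by
  intro p hp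
  obtain ⟨h1, h2, h3, h4, h5, h6⟩ := hp
  set S : Set E3 := {pt 0 0 0, pt (n : ℝ) 0 0, pt 0 (n : ℝ) 0, pt (n : ℝ) (n : ℝ) 0, pt 0 0 1}
  have hc : Convex ℝ (convexHull ℝ S) := convex_convexHull ℝ S
  have m1 : pt 0 0 0 ∈ convexHull ℝ S := subset_convexHull ℝ S (by simp [S])
  have m2 : pt (n:ℝ) 0 0 ∈ convexHull ℝ S := subset_convexHull ℝ S (by simp [S])
  have m3 : pt 0 (n:ℝ) 0 ∈ convexHull ℝ S := subset_convexHull ℝ S (by simp [S])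
  have m4 : pt (n:ℝ) (n:ℝ) 0 ∈ convexHull ℝ S := subset_convexHull ℝ S (by simp [S])
  have m5 : pt 0 0 1 ∈ convexHull ℝ S := subset_convexHull ℝ S (by simp [S])
  show p ∈ convexHull ℝ S
  rcases eq_or_lt_of_le h4 with hz1 | hz1
  · have hp0 : p 0 = 0 := le_antisymm (by nlinarith) h1
    have hp1 : p 1 = 0 := le_antisymm (by nlinarith) h2
    have : p = pt 0 0 1 := by
      ext i; fin_cases i <;> simp [pt, hp0, hp1, ← hz1]
    rw [this]; exact m5
  · rcases Nat.eq_zero_or_pos n with rfl | hn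
    · have hp0 : p 0 = 0 := le_antisymm (by push_cast at h5 ⊢; linarith) h1
      have hp1 : p 1 = 0 := le_antisymm (by push_cast at h6 ⊢; linarith) h2
      have : p = (1 - p 2) • pt 0 0 0 + (p 2) • pt 0 0 1 := by
        ext i; fin_cases i <;> simp [pt, hp0, hp1]
      rw [this]; exact hc m1 m5 (by linarith) h3 (by ring)
    · have hn' : (0:ℝ) < n := by exact_mod_cast hn
      set s : ℝ := 1 - p 2 with hs
      have hs0 : 0 < s := by simp only [hs]; linarith
      set u : ℝ := p 0 / (n * s) with hu
      set v : ℝ := p 1 / (n * s) with hv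
      have hu0 : 0 ≤ u := div_nonneg h1 (by positivity)
      have hv0 : 0 ≤ v := div_nonneg h2 (by positivity)
      have hu1 : u ≤ 1 := by
        rw [hu, div_le_one (by positivity)]; simp only [hs]; nlinarith
      have hv1 : v ≤ 1 := by
        rw [hv, div_le_one (by positivity)]; simp only [hs]; nlinarith
      have ha : (1-u) • pt 0 0 0 + u • pt (n:ℝ) 0 0 ∈ convexHull ℝ S :=
        hc m1 m2 (by linarith) hu0 (by ring)
      have hb : (1-u) • pt 0 (n:ℝ) 0 + u • pt (n:ℝ) (n:ℝ) 0 ∈ convexHull ℝ S :=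
        hc m3 m4 (by linarith) hu0 (by ring)
      have hq : (1-v) • ((1-u) • pt 0 0 0 + u • pt (n:ℝ) 0 0)
          + v • ((1-u) • pt 0 (n:ℝ) 0 + u • pt (n:ℝ) (n:ℝ) 0) ∈ convexHull ℝ S :=
        hc ha hb (by linarith) hv0 (by ring)
      have key : p = (1 - p 2) • ((1-v) • ((1-u) • pt 0 0 0 + u • pt (n:ℝ) 0 0)
          + v • ((1-u) • pt 0 (n:ℝ) 0 + u • pt (n:ℝ) (n:ℝ) 0)) + (p 2) • pt 0 0 1 := by
        ext i
        fin_cases i <;> simp [pt, hu, hv] <;> field_simp <;> ring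
      rw [key]; exact hc hq m5 (by linarith) h3 (by ring)

lemma flatPyramid_eq (n : ℕ) : flatPyramid n = Hset n :=
  le_antisymm (pyramid_subset n) (Hset_subset n)

/-! ### Volume -/

def Tset (n : ℕ) : Set (ℝ × (Fin 2 → ℝ)) :=
  {q | 0 ≤ q.1 ∧ q.1 ≤ 1 ∧ 0 ≤ q.2 0 ∧ q.2 0 + n * q.1 ≤ n ∧ 0 ≤ q.2 1 ∧ q.2 1 + n * q.1 ≤ n}

lemma Tset_meas (n : ℕ) : MeasurableSet (Tset n) := by
  have m1 : Measurable fun q : ℝ × (Fin 2 → ℝ) => q.1 := measurable_fst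
  have m2 : Measurable fun q : ℝ × (Fin 2 → ℝ) => q.2 0 :=
    (measurable_pi_apply 0).comp measurable_snd
  have m3 : Measurable fun q : ℝ × (Fin 2 → ℝ) => q.2 1 :=
    (measurable_pi_apply 1).comp measurable_snd
  unfold Tset
  simp only [Set.setOf_and]
  exact (measurableSet_le measurable_const m1).inter
    ((measurableSet_le m1 measurable_const).inter
    ((measurableSet_le measurable_const m2).inter
    ((measurableSet_le (m2.add (m1.const_mul _)) measurable_const).inter
    ((measurableSet_le measurable_const m3).inter
    (measurableSet_le (m3.add (m1.const_mul _)) measurable_const)))))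

lemma slice_vol (n : ℕ) (z : ℝ) :
    volume (Prod.mk z ⁻¹' Tset n) =
      Set.indicator (Set.Icc (0:ℝ) 1) (fun z => ENNReal.ofReal (((n:ℝ)*(1-z))^2)) z := by
  by_cases hz : z ∈ Set.Icc (0:ℝ) 1
  · rw [Set.indicator_of_mem hz]
    obtain ⟨hz0, hz1⟩ := hz
    have : Prod.mk z ⁻¹' Tset n = Set.pi Set.univ (fun _ : Fin 2 => Set.Icc (0:ℝ) (n - n*z)) := by
      ext w
      simp only [Tset, Set.mem_preimage, Set.mem_setOf_eq, Set.mem_pi, Set.mem_univ,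
        Set.mem_Icc, forall_true_left, Fin.forall_fin_two]
      constructor
      · rintro ⟨_, _, h1, h2, h3, h4⟩; exact ⟨⟨h1, by linarith⟩, ⟨h3, by linarith⟩⟩
      · rintro ⟨⟨h1, h2⟩, ⟨h3, h4⟩⟩; exact ⟨hz0, hz1, h1, by linarith, h3, by linarith⟩
    rw [this, volume_pi_pi]
    have hnn : (0:ℝ) ≤ n - n*z := by nlinarith [Nat.cast_nonneg (α := ℝ) n]
    simp only [Real.volume_Icc, sub_zero, Finset.prod_const, Finset.card_univ,
      Fintype.card_fin]
    rw [← ENNReal.ofReal_pow hnn]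
    congr 1; ring
  · rw [Set.indicator_of_notMem hz]
    have : Prod.mk z ⁻¹' Tset n = ∅ := by
      ext w
      simp only [Tset, Set.mem_preimage, Set.mem_setOf_eq, Set.mem_empty_iff_false, iff_false]
      rintro ⟨h1, h2, -⟩
      exact hz ⟨h1, h2⟩
    simp [this]

lemma integral_sq : ∀ n : ℕ, ∫ z in (0:ℝ)..1, ((n:ℝ)*(1-z))^2 = (n:ℝ)^2/3 := by
  intro n
  have : ∀ x ∈ Set.uIcc (0:ℝ) 1, HasDerivAt
      (fun x : ℝ => (n:ℝ)^2*x - (n:ℝ)^2*x^2 + (n:ℝ)^2*x^3/3) (((n:ℝ)*(1-x))^2) x := by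
    intro x _
    have h := (((hasDerivAt_id x).const_mul ((n:ℝ)^2)).sub
      (((hasDerivAt_pow 2 x)).const_mul ((n:ℝ)^2))).add
      (((hasDerivAt_pow 3 x)).const_mul ((n:ℝ)^2) |>.div_const 3)
    exact h.congr_deriv (by push_cast; ring)
  rw [intervalIntegral.integral_eq_sub_of_hasDerivAt this]
  · norm_num
  · apply Continuous.intervalIntegrable; continuity

lemma vol_Hset (n : ℕ) : volume (Hset n) = ENNReal.ofReal ((n:ℝ)^2/3) := by
  have e1 := EuclideanSpace.volume_preserving_symm_measurableEquiv_toLp (Fin 3)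
  have e2 := (MeasureTheory.volume_preserving_piFinSuccAbove (fun _ : Fin 3 => ℝ) 2)
  have hpre : Hset n = ((MeasurableEquiv.toLp 2 (Fin 3 → ℝ)).symm) ⁻¹'
      ((MeasurableEquiv.piFinSuccAbove (fun _ : Fin 3 => ℝ) 2) ⁻¹' Tset n) := by
    ext p
    have h0 : (2:Fin 3).succAbove 0 = 0 := by decide
    have h1 : (2:Fin 3).succAbove 1 = 1 := by decide
    simp [Hset, Tset, MeasurableEquiv.piFinSuccAbove, h0, h1]
    tauto
  rw [hpre, e1.measure_preimage, e2.measure_preimage]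
  · rw [Measure.volume_eq_prod, Measure.prod_apply (Tset_meas n)]
    simp_rw [slice_vol n]
    rw [lintegral_indicator measurableSet_Icc]
    rw [← ofReal_integral_eq_lintegral_ofReal]
    · rw [MeasureTheory.integral_Icc_eq_integral_Ioc,
        ← intervalIntegral.integral_of_le (by norm_num : (0:ℝ) ≤ 1), integral_sq n]
    · apply Continuous.integrableOn_Icc; continuity
    · filter_upwards with x using by positivity
  · exact (Tset_meas n).nullMeasurableSet
  · exact (((MeasurableEquiv.piFinSuccAbove (fun _ : Fin 3 => ℝ) 2)).measurable
      (Tset_meas n)).nullMeasurableSet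

/-! ### Solid angle via tangent cones -/

lemma finrank_E3 : Module.finrank ℝ E3 = 3 := by simp

lemma solidAngle_eq_of_cone (P C : Set E3) (x : E3) (ε₀ : ℝ) (hε₀ : 0 < ε₀)
    (hC : ∀ r : ℝ, 0 < r → ∀ q : E3, r • q ∈ C ↔ q ∈ C)
    (h : ∀ ε : ℝ, 0 < ε → ε < ε₀ →
      Metric.ball x ε ∩ P = (fun q => x + q) '' (Metric.ball 0 ε ∩ C)) :
    solidAngle P x
      = (volume (Metric.ball (0:E3) 1 ∩ C)).toReal / (volume (Metric.ball (0:E3) 1)).toReal := by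
  have key : ∀ ε : ℝ, 0 < ε → ε < ε₀ →
      (volume (Metric.ball x ε ∩ P)).toReal / (volume (Metric.ball x ε)).toReal
        = (volume (Metric.ball (0:E3) 1 ∩ C)).toReal
            / (volume (Metric.ball (0:E3) 1)).toReal := by
    intro ε hε hε'
    have hsmulC : ε • C = C := by
      ext q
      rw [Set.mem_smul_set_iff_inv_smul_mem₀ (ne_of_gt hε)]
      have := hC ε hε (ε⁻¹ • q)
      rw [smul_inv_smul₀ (ne_of_gt hε)] at this
      exact this.symm
    have hball : Metric.ball (0:E3) ε ∩ C = ε • (Metric.ball (0:E3) 1 ∩ C) := by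
      rw [Set.smul_set_inter₀ (ne_of_gt hε), hsmulC, smul_unitBall_of_pos hε]
    have htrans : volume (Metric.ball x ε ∩ P) = volume (Metric.ball (0:E3) ε ∩ C) := by
      rw [h ε hε hε', Set.image_add_left, measure_preimage_add]
    have hnum : volume (Metric.ball x ε ∩ P)
        = ENNReal.ofReal (ε^3) * volume (Metric.ball (0:E3) 1 ∩ C) := by
      rw [htrans, hball, Measure.addHaar_smul_of_nonneg volume hε.le, finrank_E3]
    have hden : volume (Metric.ball x ε)
        = ENNReal.ofReal (ε^3) * volume (Metric.ball (0:E3) 1) := by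
      rw [Measure.addHaar_ball volume x hε.le, finrank_E3]
    rw [hnum, hden, ENNReal.toReal_mul, ENNReal.toReal_mul,
      ENNReal.toReal_ofReal (by positivity)]
    rw [mul_div_mul_left _ _ (by positivity)]
  have hev : (fun ε => (volume (Metric.ball x ε ∩ P)).toReal
      / (volume (Metric.ball x ε)).toReal) =ᶠ[nhdsWithin (0:ℝ) (Set.Ioi 0)]
      (fun _ => (volume (Metric.ball (0:E3) 1 ∩ C)).toReal
        / (volume (Metric.ball (0:E3) 1)).toReal) := by
    filter_upwards [Ioo_mem_nhdsGT_of_mem (Set.mem_Ico.mpr ⟨le_refl 0, hε₀⟩)] with ε hε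
    exact key ε hε.1 hε.2
  exact (tendsto_const_nhds.congr' hev.symm).limUnder_eq

lemma solidAngle_mem_of_cone (P C : Set E3) (x : E3) (ε₀ : ℝ) (hε₀ : 0 < ε₀)
    (hC : ∀ r : ℝ, 0 < r → ∀ q : E3, r • q ∈ C ↔ q ∈ C)
    (h : ∀ ε : ℝ, 0 < ε → ε < ε₀ →
      Metric.ball x ε ∩ P = (fun q => x + q) '' (Metric.ball 0 ε ∩ C)) :
    solidAngle P x ∈ Set.Icc (0:ℝ) 1 := by
  rw [solidAngle_eq_of_cone P C x ε₀ hε₀ hC h]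
  have hpos : 0 < (volume (Metric.ball (0:E3) 1)).toReal :=
    ENNReal.toReal_pos (Metric.measure_ball_pos volume 0 one_pos).ne' measure_ball_lt_top.ne
  constructor
  · positivity
  · rw [div_le_one hpos]
    exact ENNReal.toReal_mono measure_ball_lt_top.ne (measure_mono Set.inter_subset_left)

/-! ### Half-space volume -/

def reflect2 : E3 ≃ₗᵢ[ℝ] E3 :=
  LinearIsometryEquiv.piLpCongrRight 2
    (fun i : Fin 3 => if i = 2 then LinearIsometryEquiv.neg ℝ else LinearIsometryEquiv.refl ℝ ℝ)

lemma reflect2_apply (p : E3) (i : Fin 3) :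
    reflect2 p i = if i = 2 then -(p i) else p i := by
  rw [reflect2, LinearIsometryEquiv.piLpCongrRight_apply]
  by_cases h : i = 2
  · subst h; simp
  · simp [h]

def Kplane : Submodule ℝ E3 where
  carrier := {p | p 2 = 0}
  add_mem' := by intro a b ha hb; simp_all
  zero_mem' := by simp
  smul_mem' := by intro c a ha; simp_all

lemma measurable_coord (i : Fin 3) : Measurable fun p : E3 => p i :=
  (measurable_pi_apply i).comp (MeasurableEquiv.toLp 2 (Fin 3 → ℝ)).symm.measurable

lemma vol_halfball :
    volume (Metric.ball (0:E3) 1 ∩ {p : E3 | 0 ≤ p 2})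
      = volume (Metric.ball (0:E3) 1) / 2 := by
  set B := Metric.ball (0:E3) 1 with hB
  set Hp : Set E3 := {p | 0 ≤ p 2} with hHp
  set Hm : Set E3 := {p | p 2 ≤ 0} with hHm
  have himg : reflect2 '' (B ∩ Hp) = B ∩ Hm := by
    rw [Set.image_inter reflect2.injective]
    congr 1
    · show reflect2.toIsometryEquiv '' B = B
      rw [IsometryEquiv.image_ball]
      simp [hB]
    · ext q
      constructor
      · rintro ⟨p, hp, rfl⟩
        show reflect2 p 2 ≤ 0
        rw [reflect2_apply]; simpa [hHp] using hp
      · intro hq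
        refine ⟨reflect2 q, ?_, ?_⟩
        · show (0:ℝ) ≤ reflect2 q 2
          rw [reflect2_apply]; simpa [hHm] using hq
        · ext i
          rw [reflect2_apply, reflect2_apply]
          by_cases h : i = 2 <;> simp [h]
  have hmeasHp : MeasurableSet Hp := measurableSet_le measurable_const (measurable_coord 2)
  have hmeasB : MeasurableSet B := Metric.isOpen_ball.measurableSet
  have heq : volume (B ∩ Hm) = volume (B ∩ Hp) := by
    rw [← himg]
    have h2 : reflect2 '' (B ∩ Hp) = (reflect2.symm : E3 → E3) ⁻¹' (B ∩ Hp) := by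
      ext q
      simp only [Set.mem_image, Set.mem_preimage]
      constructor
      · rintro ⟨p, hp, rfl⟩; simpa using hp
      · intro h; exact ⟨reflect2.symm q, h, by simp⟩
    rw [h2]
    exact (reflect2.symm.measurePreserving).measure_preimage
      (hmeasB.inter hmeasHp).nullMeasurableSet
  have hunion : (B ∩ Hp) ∪ (B ∩ Hm) = B := by
    ext q
    constructor
    · rintro (⟨h, _⟩ | ⟨h, _⟩) <;> exact h
    · intro h
      rcases le_total (0:ℝ) (q 2) with h2 | h2
      · exact Or.inl ⟨h, h2⟩
      · exact Or.inr ⟨h, h2⟩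
  have hplane : volume ((B ∩ Hp) ∩ (B ∩ Hm)) = 0 := by
    apply measure_mono_null (t := (Kplane : Set E3))
    · rintro q ⟨⟨-, h1⟩, ⟨-, h2⟩⟩
      show q 2 = 0
      exact le_antisymm h2 h1
    · apply Measure.addHaar_submodule
      intro h
      have : EuclideanSpace.single 2 (1:ℝ) ∈ Kplane := h ▸ Submodule.mem_top
      have h2 : EuclideanSpace.single 2 (1:ℝ) 2 = 0 := this
      simp [EuclideanSpace.single_apply] at h2
  have key : volume (B ∩ Hp) + volume (B ∩ Hm) = volume B := by
    have hmeasHm : MeasurableSet Hm := measurableSet_le (measurable_coord 2) measurable_const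
    have := measure_union_add_inter (μ := volume) (t := B ∩ Hm) (B ∩ Hp) (hmeasB.inter hmeasHm)
    rw [hunion, hplane, add_zero] at this
    exact this.symm
  rw [heq, ← two_mul] at key
  exact (ENNReal.eq_div_iff two_ne_zero ENNReal.ofNat_ne_top).mpr key

/-! ### Local cones at lattice points -/

lemma abs_coord_le (v : E3) (i : Fin 3) : |v i| ≤ ‖v‖ := by
  rw [EuclideanSpace.norm_eq, ← Real.sqrt_sq_eq_abs]
  apply Real.sqrt_le_sqrt
  have : ‖v i‖^2 ≤ ∑ j, ‖v j‖^2 :=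
    Finset.single_le_sum (f := fun j => ‖v j‖^2) (fun _ _ => by positivity) (Finset.mem_univ i)
  simpa [Real.norm_eq_abs, sq_abs] using this

def Cpt (n : ℕ) (x : E3) : Set E3 :=
  {q | (x 0 = 0 → 0 ≤ q 0) ∧ (x 1 = 0 → 0 ≤ q 1) ∧ (x 2 = 0 → 0 ≤ q 2) ∧ (x 2 = 1 → q 2 ≤ 0)
     ∧ (x 0 + n * x 2 = n → q 0 + n * q 2 ≤ 0) ∧ (x 1 + n * x 2 = n → q 1 + n * q 2 ≤ 0)}

lemma Cpt_cone (n : ℕ) (x : E3) : ∀ r : ℝ, 0 < r → ∀ q : E3, r • q ∈ Cpt n x ↔ q ∈ Cpt n x := by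
  intro r hr q
  have e : ∀ i : Fin 3, (r • q) i = r * q i := fun i => rfl
  simp only [Cpt, Set.mem_setOf_eq, e]
  constructor
  · rintro ⟨a1, a2, a3, a4, a5, a6⟩
    exact ⟨fun h => by nlinarith [a1 h], fun h => by nlinarith [a2 h], fun h => by nlinarith [a3 h],
      fun h => by nlinarith [a4 h], fun h => by nlinarith [a5 h], fun h => by nlinarith [a6 h]⟩
  · rintro ⟨a1, a2, a3, a4, a5, a6⟩
    exact ⟨fun h => by nlinarith [a1 h], fun h => by nlinarith [a2 h], fun h => by nlinarith [a3 h],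
      fun h => by nlinarith [a4 h], fun h => by nlinarith [a5 h], fun h => by nlinarith [a6 h]⟩

lemma lattice_local (n : ℕ) (x : E3) (hx : x ∈ Hset n)
    (h0 : x 0 = 0 ∨ 1 ≤ x 0) (h1 : x 1 = 0 ∨ 1 ≤ x 1) (h2 : x 2 = 0 ∨ x 2 = 1)
    (h5 : x 0 + n * x 2 = n ∨ x 0 + n * x 2 ≤ n - 1)
    (h6 : x 1 + n * x 2 = n ∨ x 1 + n * x 2 ≤ n - 1) :
    ∀ ε : ℝ, 0 < ε → ε < 1/(2*(n+1)) →
      Metric.ball x ε ∩ Hset n = (fun q => x + q) '' (Metric.ball 0 ε ∩ Cpt n x) := by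
  intro ε hε hε'
  obtain ⟨g1, g2, g3, g4, g5, g6⟩ := hx
  have hn0 : (0:ℝ) ≤ n := Nat.cast_nonneg n
  have hεhalf : ε * (n+1) < 1/2 := by
    rw [lt_div_iff₀ (by positivity : (0:ℝ) < 2*(n+1))] at hε'
    nlinarith
  have hε1 : ε < 1 := by nlinarith
  ext y
  simp only [Set.mem_inter_iff, Metric.mem_ball, Set.mem_image]
  constructor
  · rintro ⟨hyb, k1, k2, k3, k4, k5, k6⟩
    refine ⟨y - x, ⟨?_, ?_, ?_, ?_, ?_, ?_, ?_⟩, by abel⟩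
    · rw [dist_zero_right, ← dist_eq_norm]
      exact hyb
    · intro h; have : (y - x) 0 = y 0 - x 0 := rfl; rw [this, h]; linarith
    · intro h; have : (y - x) 1 = y 1 - x 1 := rfl; rw [this, h]; linarith
    · intro h; have : (y - x) 2 = y 2 - x 2 := rfl; rw [this, h]; linarith
    · intro h; have : (y - x) 2 = y 2 - x 2 := rfl; rw [this, h]; linarith
    · intro h
      have e0 : (y - x) 0 = y 0 - x 0 := rfl
      have e2 : (y - x) 2 = y 2 - x 2 := rfl
      rw [e0, e2]; linarith
    · intro h
      have e1 : (y - x) 1 = y 1 - x 1 := rfl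
      have e2 : (y - x) 2 = y 2 - x 2 := rfl
      rw [e1, e2]; linarith
  · rintro ⟨q, ⟨hqb, c1, c2, c3, c4, c5, c6⟩, rfl⟩
    rw [dist_zero_right] at hqb
    have hq0 := (abs_lt.mp ((abs_coord_le q 0).trans_lt hqb))
    have hq1 := (abs_lt.mp ((abs_coord_le q 1).trans_lt hqb))
    have hq2 := (abs_lt.mp ((abs_coord_le q 2).trans_lt hqb))
    have e : ∀ i : Fin 3, (x + q) i = x i + q i := fun i => rfl
    have hb : dist (x + q) x < ε := by
      rw [dist_eq_norm]
      simpa using hqb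
    refine ⟨hb, ?_, ?_, ?_, ?_, ?_, ?_⟩ <;> rw [e] <;> try rw [e]
    · rcases h0 with h | h
      · linarith [c1 h]
      · linarith
    · rcases h1 with h | h
      · linarith [c2 h]
      · linarith
    · rcases h2 with h | h
      · linarith [c3 h]
      · linarith
    · rcases h2 with h | h
      · linarith
      · linarith [c4 h]
    · show x 0 + q 0 + n * (x 2 + q 2) ≤ n
      rcases h5 with h | h
      · have := c5 h; nlinarith
      · nlinarith
    · show x 1 + q 1 + n * (x 2 + q 2) ≤ n
      rcases h6 with h | h
      · have := c6 h; nlinarith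
      · nlinarith

/-! ### Lattice points and the sum -/

def zc (v : Fin 3 → ℤ) : E3 := (WithLp.toLp 2 (fun i => (v i : ℝ)) : E3)

lemma zc_apply (v : Fin 3 → ℤ) (i : Fin 3) : zc v i = (v i : ℝ) := rfl

lemma mem_Hset_zc (n : ℕ) (v : Fin 3 → ℤ) :
    zc v ∈ Hset n ↔
      (0 ≤ v 0 ∧ 0 ≤ v 1 ∧ 0 ≤ v 2 ∧ v 2 ≤ 1 ∧ v 0 + n * v 2 ≤ n ∧ v 1 + n * v 2 ≤ n) := by
  constructor
  · rintro ⟨h1, h2, h3, h4, h5, h6⟩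
    simp only [zc_apply] at h1 h2 h3 h4 h5 h6
    refine ⟨by exact_mod_cast h1, by exact_mod_cast h2, by exact_mod_cast h3,
      by exact_mod_cast h4, by exact_mod_cast h5, by exact_mod_cast h6⟩
  · rintro ⟨h1, h2, h3, h4, h5, h6⟩
    refine ⟨?_, ?_, ?_, ?_, ?_, ?_⟩
    · show (0:ℝ) ≤ (v 0 : ℝ); exact_mod_cast h1
    · show (0:ℝ) ≤ (v 1 : ℝ); exact_mod_cast h2
    · show (0:ℝ) ≤ (v 2 : ℝ); exact_mod_cast h3
    · show (v 2 : ℝ) ≤ 1; exact_mod_cast h4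
    · show (v 0 : ℝ) + n * (v 2 : ℝ) ≤ n; exact_mod_cast h5
    · show (v 1 : ℝ) + n * (v 2 : ℝ) ≤ n; exact_mod_cast h6

def sgrid (n : ℕ) : Finset (Fin 3 → ℤ) :=
  Finset.Icc 0 ![(n:ℤ), (n:ℤ), 0] ∪ {![0, 0, 1]}

def igrid (n : ℕ) : Finset (Fin 3 → ℤ) :=
  Finset.Icc ![1, 1, 0] ![(n:ℤ)-1, (n:ℤ)-1, 0]

lemma mem_igrid (n : ℕ) (v : Fin 3 → ℤ) :
    v ∈ igrid n ↔ 1 ≤ v 0 ∧ v 0 ≤ (n:ℤ)-1 ∧ 1 ≤ v 1 ∧ v 1 ≤ (n:ℤ)-1 ∧ v 2 = 0 := by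
  rw [igrid, Finset.mem_Icc, Pi.le_def, Pi.le_def]
  constructor
  · rintro ⟨hlo, hhi⟩
    have l0 := hlo 0; have l1 := hlo 1; have l2 := hlo 2
    have u0 := hhi 0; have u1 := hhi 1; have u2 := hhi 2
    simp only [Matrix.cons_val_zero, Matrix.cons_val_one, Matrix.head_cons] at l0 l1 l2 u0 u1 u2
    refine ⟨l0, u0, l1, u1, le_antisymm ?_ ?_⟩
    · simpa using u2
    · simpa using l2
  · rintro ⟨a, b, c, d, e⟩
    constructor <;> intro i <;> fin_cases i <;> simp [a, b, c, d, e]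

lemma mem_sgrid_of_mem_Hset (n : ℕ) (v : Fin 3 → ℤ) (hv : zc v ∈ Hset n) : v ∈ sgrid n := by
  rw [mem_Hset_zc] at hv
  obtain ⟨h1, h2, h3, h4, h5, h6⟩ := hv
  have : v 2 = 0 ∨ v 2 = 1 := by omega
  rcases this with h | h
  · rw [h] at h5 h6
    simp only [mul_zero, add_zero] at h5 h6
    apply Finset.mem_union_left
    rw [Finset.mem_Icc]
    constructor <;> intro i <;> fin_cases i <;> simp [h] <;> omega
  · rw [h] at h5 h6
    simp only [mul_one] at h5 h6
    apply Finset.mem_union_right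
    have hv0 : v 0 = 0 := by omega
    have hv1 : v 1 = 0 := by omega
    have : v = ![0, 0, 1] := by
      funext i; fin_cases i <;> simp [hv0, hv1, h]
    simp [this]

lemma discreteVolume_eq (n : ℕ) :
    discreteVolume (flatPyramid n)
      = ∑ v ∈ sgrid n, Set.indicator (Hset n) (solidAngle (Hset n)) (zc v) := by
  rw [discreteVolume, flatPyramid_eq]
  exact tsum_eq_sum fun v hv =>
    Set.indicator_of_notMem (fun hmem => hv (mem_sgrid_of_mem_Hset n v hmem)) _

lemma zc_or_facts (n : ℕ) (v : Fin 3 → ℤ) (hv : zc v ∈ Hset n) :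
    (zc v 0 = 0 ∨ 1 ≤ zc v 0) ∧ (zc v 1 = 0 ∨ 1 ≤ zc v 1) ∧ (zc v 2 = 0 ∨ zc v 2 = 1) ∧
    (zc v 0 + n * zc v 2 = n ∨ zc v 0 + n * zc v 2 ≤ n - 1) ∧
    (zc v 1 + n * zc v 2 = n ∨ zc v 1 + n * zc v 2 ≤ n - 1) := by
  rw [mem_Hset_zc] at hv
  obtain ⟨h1, h2, h3, h4, h5, h6⟩ := hv
  simp only [zc_apply]
  refine ⟨?_, ?_, ?_, ?_, ?_⟩
  · rcases (by omega : v 0 = 0 ∨ 1 ≤ v 0) with h | h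
    · left; exact_mod_cast h
    · right; exact_mod_cast h
  · rcases (by omega : v 1 = 0 ∨ 1 ≤ v 1) with h | h
    · left; exact_mod_cast h
    · right; exact_mod_cast h
  · rcases (by omega : v 2 = 0 ∨ v 2 = 1) with h | h
    · left; exact_mod_cast h
    · right; exact_mod_cast h
  · rcases (by omega : v 0 + n * v 2 = n ∨ v 0 + n * v 2 ≤ (n:ℤ) - 1) with h | h
    · left; exact_mod_cast h
    · right
      have : ((v 0 + n * v 2 : ℤ) : ℝ) ≤ ((n:ℤ) - 1 : ℤ) := by exact_mod_cast h
      push_cast at this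
      push_cast
      linarith
  · rcases (by omega : v 1 + n * v 2 = n ∨ v 1 + n * v 2 ≤ (n:ℤ) - 1) with h | h
    · left; exact_mod_cast h
    · right
      have : ((v 1 + n * v 2 : ℤ) : ℝ) ≤ ((n:ℤ) - 1 : ℤ) := by exact_mod_cast h
      push_cast at this
      push_cast
      linarith

lemma solidAngle_bound (n : ℕ) (v : Fin 3 → ℤ) (hv : zc v ∈ Hset n) :
    solidAngle (Hset n) (zc v) ∈ Set.Icc (0:ℝ) 1 := by
  obtain ⟨a1, a2, a3, a4, a5⟩ := zc_or_facts n v hv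
  exact solidAngle_mem_of_cone (Hset n) (Cpt n (zc v)) (zc v) (1/(2*(n+1)))
    (by positivity) (Cpt_cone n (zc v)) (lattice_local n (zc v) hv a1 a2 a3 a4 a5)

lemma solidAngle_interior (n : ℕ) (v : Fin 3 → ℤ)
    (b0 : 1 ≤ v 0) (b0' : v 0 ≤ (n:ℤ) - 1) (b1 : 1 ≤ v 1) (b1' : v 1 ≤ (n:ℤ) - 1)
    (b2 : v 2 = 0) :
    solidAngle (Hset n) (zc v) = 1/2 := by
  have hv : zc v ∈ Hset n := by
    rw [mem_Hset_zc]
    refine ⟨by omega, by omega, by omega, by omega, ?_, ?_⟩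
    · rw [b2, mul_zero, add_zero]; omega
    · rw [b2, mul_zero, add_zero]; omega
  obtain ⟨a1, a2, a3, a4, a5⟩ := zc_or_facts n v hv
  have hcone : Cpt n (zc v) = {q : E3 | 0 ≤ q 2} := by
    have e0 : zc v 0 ≠ 0 := by
      rw [zc_apply]; exact Int.cast_ne_zero.mpr (by omega : v 0 ≠ 0)
    have e1 : zc v 1 ≠ 0 := by
      rw [zc_apply]; exact Int.cast_ne_zero.mpr (by omega : v 1 ≠ 0)
    have e2 : zc v 2 = 0 := by rw [zc_apply, b2, Int.cast_zero]
    have e2' : zc v 2 ≠ 1 := by rw [e2]; norm_num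
    have e5 : zc v 0 + n * zc v 2 ≠ n := by
      simp only [zc_apply]
      exact_mod_cast (by rw [b2, mul_zero, add_zero]; omega : v 0 + (n:ℤ) * v 2 ≠ (n:ℤ))
    have e6 : zc v 1 + n * zc v 2 ≠ n := by
      simp only [zc_apply]
      exact_mod_cast (by rw [b2, mul_zero, add_zero]; omega : v 1 + (n:ℤ) * v 2 ≠ (n:ℤ))
    ext q
    simp only [Cpt, Set.mem_setOf_eq]
    constructor
    · rintro ⟨-, -, c3, -, -, -⟩
      exact c3 e2
    · intro h
      exact ⟨fun habs => absurd habs e0, fun habs => absurd habs e1, fun _ => h,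
        fun habs => absurd habs e2', fun habs => absurd habs e5, fun habs => absurd habs e6⟩
  rw [solidAngle_eq_of_cone (Hset n) (Cpt n (zc v)) (zc v) (1/(2*(n+1)))
    (by positivity) (Cpt_cone n (zc v)) (lattice_local n (zc v) hv a1 a2 a3 a4 a5),
    hcone, vol_halfball, ENNReal.toReal_div]
  have hpos : 0 < (volume (Metric.ball (0:E3) 1)).toReal :=
    ENNReal.toReal_pos (Metric.measure_ball_pos volume 0 one_pos).ne' measure_ball_lt_top.ne
  rw [show ((2:ENNReal)).toReal = 2 by simp]
  field_simp

lemma igrid_subset (n : ℕ) : igrid n ⊆ sgrid n := by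
  intro v hv
  rw [mem_igrid] at hv
  apply Finset.mem_union_left
  rw [Finset.mem_Icc]
  constructor <;> intro i <;> fin_cases i <;> simp <;> omega

lemma card_igrid (n : ℕ) (hn : 1 ≤ n) : ((igrid n).card : ℝ) = ((n:ℝ) - 1)^2 := by
  rw [igrid, Pi.card_Icc, Fin.prod_univ_three]
  simp only [Matrix.cons_val_zero, Matrix.cons_val_one, Matrix.head_cons, Int.card_Icc]
  have h1 : ((n:ℤ) - 1 + 1 - 1).toNat = n - 1 := by omega
  have h2 : ((![(1:ℤ),1,0]) 2) = 0 := rfl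
  have h3 : ((![(n:ℤ)-1,(n:ℤ)-1,0]) 2) = 0 := rfl
  rw [h2, h3, h1]
  have h4 : ((0:ℤ) + 1 - 0).toNat = 1 := by norm_num
  rw [h4, mul_one]
  push_cast [Nat.cast_sub hn]
  ring

lemma card_sgrid_le (n : ℕ) : ((sgrid n).card : ℝ) ≤ ((n:ℝ) + 1)^2 + 1 := by
  have h1 : (sgrid n).card ≤ (Finset.Icc (0 : Fin 3 → ℤ) ![(n:ℤ), (n:ℤ), 0]).card + 1 := by
    rw [sgrid]
    exact (Finset.card_union_le _ _).trans (by simp)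
  have h2 : (Finset.Icc (0 : Fin 3 → ℤ) ![(n:ℤ), (n:ℤ), 0]).card = (n+1) * (n+1) := by
    rw [Pi.card_Icc, Fin.prod_univ_three]
    simp only [Pi.zero_apply, Matrix.cons_val_zero, Matrix.cons_val_one, Matrix.head_cons,
      Int.card_Icc]
    have h2a : ((![(n:ℤ),(n:ℤ),0]) 2) = 0 := rfl
    rw [h2a]
    have ha : ((n:ℤ) + 1 - 0).toNat = n + 1 := by omega
    have hb : ((0:ℤ) + 1 - 0).toNat = 1 := by norm_num
    rw [ha, hb, mul_one]
  calc ((sgrid n).card : ℝ) ≤ (((n+1) * (n+1) + 1 : ℕ) : ℝ) := by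
        exact_mod_cast h1.trans (by omega)
    _ ≤ ((n:ℝ) + 1)^2 + 1 := by push_cast; nlinarith

lemma chi_est (n : ℕ) (hn : 2 ≤ n) :
    |discreteVolume (flatPyramid n) - (n:ℝ)^2/2| ≤ 6 * (n:ℝ) := by
  have hn1 : (1:ℕ) ≤ n := by omega
  have hnR : (2:ℝ) ≤ n := by exact_mod_cast hn
  rw [discreteVolume_eq n]
  set f : (Fin 3 → ℤ) → ℝ := fun v => Set.indicator (Hset n) (solidAngle (Hset n)) (zc v)
    with hf
  have hsplit : ∑ v ∈ sgrid n, f v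
      = (∑ v ∈ sgrid n \ igrid n, f v) + ∑ v ∈ igrid n, f v :=
    (Finset.sum_sdiff (igrid_subset n)).symm
  have hval : ∀ v ∈ igrid n, f v = 1/2 := by
    intro v hv
    rw [mem_igrid] at hv
    obtain ⟨a, b, c, d, e⟩ := hv
    have hmem : zc v ∈ Hset n := by
      rw [mem_Hset_zc]
      refine ⟨by omega, by omega, by omega, by omega, ?_, ?_⟩
      · rw [e, mul_zero, add_zero]; omega
      · rw [e, mul_zero, add_zero]; omega
    rw [hf]
    simp only
    rw [Set.indicator_of_mem hmem, solidAngle_interior n v a b c d e]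
  have hint : ∑ v ∈ igrid n, f v = ((n:ℝ)-1)^2 / 2 := by
    rw [Finset.sum_congr rfl hval, Finset.sum_const, nsmul_eq_mul, card_igrid n hn1]
    ring
  have hbnd : ∀ v ∈ sgrid n \ igrid n, f v ∈ Set.Icc (0:ℝ) 1 := by
    intro v _
    rw [hf]
    simp only
    by_cases h : zc v ∈ Hset n
    · rw [Set.indicator_of_mem h]; exact solidAngle_bound n v h
    · rw [Set.indicator_of_notMem h]; exact ⟨le_refl 0, by norm_num⟩
  have hR0 : 0 ≤ ∑ v ∈ sgrid n \ igrid n, f v :=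
    Finset.sum_nonneg fun v hv => (hbnd v hv).1
  have hR1 : ∑ v ∈ sgrid n \ igrid n, f v ≤ ((sgrid n \ igrid n).card : ℝ) := by
    calc ∑ v ∈ sgrid n \ igrid n, f v ≤ (sgrid n \ igrid n).card • (1:ℝ) :=
      Finset.sum_le_card_nsmul _ _ _ fun v hv => (hbnd v hv).2
    _ = ((sgrid n \ igrid n).card : ℝ) := by rw [nsmul_eq_mul, mul_one]
  have hcard : ((sgrid n \ igrid n).card : ℝ) ≤ 4 * n + 2 := by
    have hsub := Finset.card_sdiff_of_subset (igrid_subset n)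
    have hle : (igrid n).card ≤ (sgrid n).card := Finset.card_le_card (igrid_subset n)
    have heq : ((sgrid n \ igrid n).card : ℝ) = ((sgrid n).card : ℝ) - ((igrid n).card : ℝ) := by
      rw [hsub, Nat.cast_sub hle]
    rw [heq, card_igrid n hn1]
    have := card_sgrid_le n
    nlinarith
  rw [hsplit, hint]
  rw [abs_le]
  constructor <;> nlinarith

end Aux

theorem flat_pyramid_volume_discreteVolume_defect :
    (∀ n : ℕ, (volume (flatPyramid n)).toReal = (n : ℝ) ^ 2 / 3) ∧
    (fun n : ℕ => discreteVolume (flatPyramid n) - (n : ℝ) ^ 2 / 2)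
      =O[Filter.atTop] (fun n : ℕ => (n : ℝ)) ∧
    Asymptotics.IsEquivalent Filter.atTop
      (fun n : ℕ => defect (flatPyramid n)) (fun n : ℕ => (n : ℝ) ^ 2 / 6) := by
  have hvol : ∀ n : ℕ, (volume (flatPyramid n)).toReal = (n:ℝ)^2/3 := by
    intro n
    rw [flatPyramid_eq, vol_Hset, ENNReal.toReal_ofReal (by positivity)]
  have hO : (fun n : ℕ => discreteVolume (flatPyramid n) - (n : ℝ) ^ 2 / 2)
      =O[Filter.atTop] (fun n : ℕ => (n : ℝ)) := by
    rw [Asymptotics.isBigO_iff]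
    refine ⟨6, ?_⟩
    filter_upwards [Filter.eventually_ge_atTop 2] with n hn
    have h1 : ‖(n:ℝ)‖ = (n:ℝ) := by
      rw [Real.norm_eq_abs, abs_of_nonneg (Nat.cast_nonneg n)]
    rw [Real.norm_eq_abs, h1]
    exact chi_est n hn
  refine ⟨hvol, hO, ?_⟩
  have hfun : (fun n : ℕ => defect (flatPyramid n) - (n:ℝ)^2/6)
      = (fun n : ℕ => discreteVolume (flatPyramid n) - (n:ℝ)^2/2) := by
    funext n
    rw [defect, hvol n]; ring
  have ho : (fun n : ℕ => (n:ℝ)) =o[Filter.atTop] (fun n : ℕ => (n:ℝ)^2/6) := by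
    rw [Asymptotics.isLittleO_iff]
    intro c hc
    obtain ⟨N, hN⟩ := exists_nat_ge (6/c)
    filter_upwards [Filter.eventually_ge_atTop (max N 1)] with n hn
    have hNn : (N:ℝ) ≤ n := by
      exact_mod_cast (le_max_left N 1).trans hn
    have h1n : (1:ℝ) ≤ n := by
      exact_mod_cast (le_max_right N 1).trans hn
    have hcN : 6 ≤ c * N := by
      rw [div_le_iff₀ hc] at hN
      linarith [hN]
    rw [Real.norm_eq_abs, Real.norm_eq_abs, abs_of_nonneg (Nat.cast_nonneg n),
      abs_of_nonneg (by positivity : (0:ℝ) ≤ (n:ℝ)^2/6)]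
    have hcn : 6 ≤ c * n := by nlinarith
    nlinarith
  show ((fun n : ℕ => defect (flatPyramid n)) - (fun n : ℕ => (n:ℝ)^2/6))
      =o[Filter.atTop] (fun n : ℕ => (n:ℝ)^2/6)
  have hsub : ((fun n : ℕ => defect (flatPyramid n)) - (fun n : ℕ => (n:ℝ)^2/6))
      = (fun n : ℕ => defect (flatPyramid n) - (n:ℝ)^2/6) := rfl
  rw [hsub, hfun]
  exact hO.trans_isLittleO ho
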